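/- Let G be a (2,ℓ)-tight simple graph for ℓ ∈ {1,2} containing a subgraph K isomorphic to K₄, and let G/K be obtained by contracting K to a single vertex v* (identifying the four vertices of K, deleting the edges of K, and replacing each edge from a vertex outside K to a vertex of K by an edge to v*). Suppose no triangle of G has exactly two vertices in K. Then G/K is a simple graph and is (2,ℓ)-tight. -/

import Mathlib

open SimpleGraph

def Sparse (ℓ : ℕ) {V : Type*} (G : SimpleGraph V) : Prop :=
  ∀ H : G.Subgraph, H.edgeSet.Nonempty → H.edgeSet.ncard + ℓ ≤ 2 * H.verts.ncard

def Tight (ℓ : ℕ) {V : Type*} (G : SimpleGraph V) : Prop :=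
  Sparse ℓ G ∧ G.edgeSet.ncard + ℓ = 2 * Nat.card V

/-- The graph `G/K` obtained by contracting the vertex set `s` (here a copy of `K₄`)
to the single new vertex `Sum.inr ()`. -/
def contractGraph {V : Type*} (G : SimpleGraph V) (s : Set V) :
    SimpleGraph ({x : V // x ∉ s} ⊕ Unit) :=
  SimpleGraph.fromRel (fun x y =>
    (∃ a b : {x : V // x ∉ s}, x = Sum.inl a ∧ y = Sum.inl b ∧ G.Adj a.1 b.1) ∨
    (∃ (a : {x : V // x ∉ s}) (w : V), x = Sum.inl a ∧ y = Sum.inr () ∧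
      w ∈ s ∧ G.Adj a.1 w))

open Classical in
noncomputable def toC {V : Type*} (s : Set V) (v : V) : {x : V // x ∉ s} ⊕ Unit :=
  if h : v ∈ s then Sum.inr () else Sum.inl ⟨v, h⟩

def Ks {V : Type*} (s : Set V) : Set (Sym2 V) :=
  {e | (∀ v ∈ e, v ∈ s) ∧ ¬ e.IsDiag}

section Aux
variable {V : Type*} {G : SimpleGraph V} {s : Set V}

lemma toC_mem {v : V} (h : v ∈ s) : toC s v = Sum.inr () := by simp [toC, h]

lemma toC_not_mem {v : V} (h : v ∉ s) : toC s v = Sum.inl ⟨v, h⟩ := by simp [toC, h]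

lemma contract_adj_inl_inl {a b : {x : V // x ∉ s}} :
    (contractGraph G s).Adj (Sum.inl a) (Sum.inl b) ↔ G.Adj a.1 b.1 := by
  constructor
  · rintro ⟨hne, h | h⟩ <;> rcases h with (⟨a', b', h1, h2, h3⟩ | ⟨a', w, h1, h2, h3⟩) <;>
      simp_all <;> subst h1 <;> subst h2 <;> exact h3.symm
  · intro h
    exact ⟨by simpa [Subtype.ext_iff] using h.ne, Or.inl (Or.inl ⟨a, b, rfl, rfl, h⟩)⟩

lemma contract_adj_inl_inr {a : {x : V // x ∉ s}} :
    (contractGraph G s).Adj (Sum.inl a) (Sum.inr ()) ↔ ∃ w ∈ s, G.Adj a.1 w := by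
  constructor
  · rintro ⟨hne, h | h⟩ <;> rcases h with (⟨a', b', h1, h2, h3⟩ | ⟨a', w, h1, h2, h3⟩) <;>
      simp_all
    exact ⟨w, h3⟩
  · rintro ⟨w, hw, h⟩
    exact ⟨by simp, Or.inl (Or.inr ⟨a, w, rfl, rfl, hw, h⟩)⟩

lemma contract_adj_inr_inr {u u' : Unit} :
    ¬ (contractGraph G s).Adj (Sum.inr u) (Sum.inr u') := by
  rintro ⟨hne, _⟩; exact hne (by simp)

lemma mem_Ks {u v : V} :
    s(u,v) ∈ Ks s ↔ u ∈ s ∧ v ∈ s ∧ u ≠ v := by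
  simp only [Ks, Set.mem_setOf_eq, Sym2.mem_iff, Sym2.mk_isDiag_iff]
  constructor
  · rintro ⟨h, hne⟩
    exact ⟨h u (Or.inl rfl), h v (Or.inr rfl), hne⟩
  · rintro ⟨hu, hv, hne⟩
    exact ⟨fun w hw => by rcases hw with rfl | rfl <;> assumption, hne⟩

lemma Ks_eq {a b c d : V} (hab : a≠b) (hac : a≠c) (had : a≠d)
    (hbc : b≠c) (hbd : b≠d) (hcd : c≠d) :
    Ks (insert a {b, c, d} : Set V) =
      ({s(a,b), s(a,c), s(a,d), s(b,c), s(b,d), s(c,d)} : Set (Sym2 V)) := by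
  apply Set.Subset.antisymm
  · intro e
    induction e using Sym2.ind with
    | _ x y =>
      intro he
      rw [mem_Ks] at he
      obtain ⟨hx, hy, hne⟩ := he
      simp only [Set.mem_insert_iff, Set.mem_singleton_iff] at hx hy ⊢
      rcases hx with rfl | rfl | rfl | rfl <;> rcases hy with rfl | rfl | rfl | rfl <;>
        simp_all [Sym2.eq_iff]
  · intro e he
    simp only [Set.mem_insert_iff, Set.mem_singleton_iff] at he
    rcases he with rfl | rfl | rfl | rfl | rfl | rfl <;> rw [mem_Ks] <;>
      refine ⟨by simp, by simp, by assumption⟩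

lemma ncard_Ks [Finite V] (hs4 : s.ncard = 4) : (Ks s).ncard = 6 := by
  rw [Set.ncard_eq_succ] at hs4
  obtain ⟨a, t, hat, rfl, ht⟩ := hs4
  rw [Set.ncard_eq_three] at ht
  obtain ⟨b, c, d, hbc, hbd, hcd, rfl⟩ := ht
  simp only [Set.mem_insert_iff, Set.mem_singleton_iff, not_or] at hat
  obtain ⟨hab, hac, had⟩ := hat
  rw [Ks_eq hab hac had hbc hbd hcd]
  rw [Set.ncard_insert_of_notMem (by simp [Sym2.eq_iff]; tauto),
      Set.ncard_insert_of_notMem (by simp [Sym2.eq_iff]; tauto),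
      Set.ncard_insert_of_notMem (by simp [Sym2.eq_iff]; tauto),
      Set.ncard_insert_of_notMem (by simp [Sym2.eq_iff]; tauto),
      Set.ncard_insert_of_notMem (by simp [Sym2.eq_iff]; tauto),
      Set.ncard_singleton]

lemma map_toC_inj
    (hone : ∀ x ∉ s, ∀ w ∈ s, ∀ w' ∈ s, G.Adj x w → G.Adj x w' → w = w')
    {u v u' v' : V} (hu : u ∉ s) (hu' : u' ∉ s)
    (ha : G.Adj u v) (ha' : G.Adj u' v')
    (h : Sym2.map (toC s) s(u,v) = Sym2.map (toC s) s(u',v')) :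
    s(u,v) = s(u',v') := by
  rw [Sym2.map_pair_eq, Sym2.map_pair_eq, toC_not_mem hu, toC_not_mem hu'] at h
  by_cases hv : v ∈ s <;> by_cases hv' : v' ∈ s
  · rw [toC_mem hv, toC_mem hv', Sym2.eq_iff] at h
    rcases h with ⟨h1, _⟩ | ⟨h1, h2⟩
    · simp only [Sum.inl.injEq, Subtype.mk.injEq] at h1
      subst h1
      rw [hone u hu v hv v' hv' ha ha']
    · simp at h1
  · rw [toC_mem hv, toC_not_mem hv', Sym2.eq_iff] at h
    simp at h
  · rw [toC_not_mem hv, toC_mem hv', Sym2.eq_iff] at h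
    simp at h
  · rw [toC_not_mem hv, toC_not_mem hv', Sym2.eq_iff] at h
    simp only [Sum.inl.injEq, Subtype.mk.injEq] at h
    rw [Sym2.eq_iff]
    tauto

lemma rep {e : Sym2 V} (he : e ∈ G.edgeSet) (hk : e ∉ Ks s) :
    ∃ u v, e = s(u,v) ∧ G.Adj u v ∧ u ∉ s := by
  induction e using Sym2.ind with
  | _ x y =>
    rw [SimpleGraph.mem_edgeSet] at he
    by_cases hx : x ∈ s
    · refine ⟨y, x, Sym2.eq_swap.symm, he.symm, fun hy => ?_⟩
      exact hk (mem_Ks.mpr ⟨hx, hy, he.ne⟩)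
    · exact ⟨x, y, rfl, he, hx⟩

lemma injOn_map_toC
    (hone : ∀ x ∉ s, ∀ w ∈ s, ∀ w' ∈ s, G.Adj x w → G.Adj x w' → w = w')
    {P : Set (Sym2 V)} (hP : P ⊆ G.edgeSet) :
    Set.InjOn (Sym2.map (toC s)) (P \ Ks s) := by
  rintro e₁ ⟨he₁, hk₁⟩ e₂ ⟨he₂, hk₂⟩ h
  obtain ⟨u, v, rfl, ha, hu⟩ := rep (hP he₁) hk₁
  obtain ⟨u', v', rfl, ha', hu'⟩ := rep (hP he₂) hk₂
  exact map_toC_inj hone hu hu' ha ha' h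

end Aux

/-- Pullback of a subgraph of the contraction. -/
noncomputable def pull {V : Type*} (G : SimpleGraph V) (s : Set V)
    (H' : (contractGraph G s).Subgraph) : G.Subgraph where
  verts := {v | toC s v ∈ H'.verts}
  Adj u v := G.Adj u v ∧
    ((u ∈ s ∧ v ∈ s ∧ Sum.inr () ∈ H'.verts) ∨ H'.Adj (toC s u) (toC s v))
  adj_sub h := h.1
  edge_vert := by
    rintro u v ⟨hG, (⟨hu, hv, hr⟩ | h)⟩
    · simpa [toC_mem hu] using hr
    · exact h.fst_mem
  symm := by
    refine ⟨?_⟩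
    rintro u v ⟨hG, (⟨hu, hv, hr⟩ | h)⟩
    · exact ⟨hG.symm, Or.inl ⟨hv, hu, hr⟩⟩
    · exact ⟨hG.symm, Or.inr h.symm⟩

section Main
variable {V : Type*} {G : SimpleGraph V} {s : Set V}
  {H' : (contractGraph G s).Subgraph}

lemma image_pull_edges :
    Sym2.map (toC s) '' ((pull G s H').edgeSet \ Ks s) = H'.edgeSet := by
  apply Set.Subset.antisymm
  · rintro e' ⟨e, ⟨he, hk⟩, rfl⟩
    obtain ⟨u, v, rfl, ha, hu⟩ := rep ((pull G s H').edgeSet_subset he) hk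
    rw [Subgraph.mem_edgeSet] at he
    rcases he.2 with ⟨hus, _, _⟩ | hadj
    · exact absurd hus hu
    · rw [Sym2.map_pair_eq, Subgraph.mem_edgeSet]
      exact hadj
  · intro e'
    induction e' using Sym2.ind with
    | _ x y =>
      intro he'
      rw [Subgraph.mem_edgeSet] at he'
      match x, y with
      | Sum.inl a, Sum.inl b =>
        have hG : G.Adj a.1 b.1 := contract_adj_inl_inl.mp (H'.adj_sub he')
        refine ⟨s(a.1, b.1), ⟨?_, fun h => a.2 (mem_Ks.mp h).1⟩, ?_⟩
        · rw [Subgraph.mem_edgeSet]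
          refine ⟨hG, Or.inr ?_⟩
          rw [toC_not_mem a.2, toC_not_mem b.2]
          exact he'
        · rw [Sym2.map_pair_eq, toC_not_mem a.2, toC_not_mem b.2]
      | Sum.inl a, Sum.inr u =>
        cases u
        obtain ⟨w, hw, hGw⟩ := contract_adj_inl_inr.mp (H'.adj_sub he')
        refine ⟨s(a.1, w), ⟨?_, fun h => a.2 (mem_Ks.mp h).1⟩, ?_⟩
        · rw [Subgraph.mem_edgeSet]
          refine ⟨hGw, Or.inr ?_⟩
          rw [toC_not_mem a.2, toC_mem hw]
          exact he'
        · rw [Sym2.map_pair_eq, toC_not_mem a.2, toC_mem hw]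
      | Sum.inr u, Sum.inl a =>
        cases u
        obtain ⟨w, hw, hGw⟩ := contract_adj_inl_inr.mp (H'.adj_sub he'.symm)
        refine ⟨s(a.1, w), ⟨?_, fun h => a.2 (mem_Ks.mp h).1⟩, ?_⟩
        · rw [Subgraph.mem_edgeSet]
          refine ⟨hGw, Or.inr ?_⟩
          rw [toC_not_mem a.2, toC_mem hw]
          exact he'.symm
        · rw [Sym2.map_pair_eq, toC_not_mem a.2, toC_mem hw, Sym2.eq_swap]
      | Sum.inr u, Sum.inr u' =>
        exact absurd (H'.adj_sub he') contract_adj_inr_inr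

lemma Ks_subset_pull (hK : ∀ a ∈ s, ∀ b ∈ s, a ≠ b → G.Adj a b)
    (hr : Sum.inr () ∈ H'.verts) :
    Ks s ⊆ (pull G s H').edgeSet := by
  intro e
  induction e using Sym2.ind with
  | _ x y =>
    intro he
    obtain ⟨hx, hy, hne⟩ := mem_Ks.mp he
    exact Subgraph.mem_edgeSet.mpr ⟨hK x hx y hy hne, Or.inl ⟨hx, hy, hr⟩⟩

lemma pull_inter_Ks (hr : Sum.inr () ∉ H'.verts) :
    (pull G s H').edgeSet ∩ Ks s = ∅ := by
  ext e
  simp only [Set.mem_inter_iff, Set.mem_empty_iff_false, iff_false, not_and]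
  induction e using Sym2.ind with
  | _ x y =>
    intro he hk
    obtain ⟨hx, _, _⟩ := mem_Ks.mp hk
    rw [Subgraph.mem_edgeSet] at he
    rcases he.2 with ⟨_, _, h⟩ | hadj
    · exact hr h
    · exact hr (by simpa [toC_mem hx] using hadj.fst_mem)

end Main

section Count
variable {V : Type*} [Finite V] {G : SimpleGraph V} {s : Set V}
  {H' : (contractGraph G s).Subgraph}

lemma verts_pull_inr (hs4 : s.ncard = 4) (hr : Sum.inr () ∈ H'.verts) :
    (pull G s H').verts.ncard = H'.verts.ncard + 3 := by
  set A : Set {x : V // x ∉ s} := {a | Sum.inl a ∈ H'.verts} with hA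
  have h1 : H'.verts = Sum.inl '' A ∪ {Sum.inr ()} := by
    ext x
    cases x with
    | inl a => simp [hA]
    | inr u => cases u; simp [hr]
  have h2 : (pull G s H').verts = s ∪ Subtype.val '' A := by
    ext v
    simp only [pull, Set.mem_setOf_eq, Set.mem_union]
    constructor
    · intro h
      by_cases hv : v ∈ s
      · exact Or.inl hv
      · rw [toC_not_mem hv] at h
        exact Or.inr ⟨⟨v, hv⟩, h, rfl⟩
    · rintro (hv | ⟨a, ha, rfl⟩)
      · rw [toC_mem hv]; exact hr
      · rw [toC_not_mem a.2]; exact ha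
  rw [h1, h2]
  rw [Set.ncard_union_eq (by rw [Set.disjoint_left]; rintro v hv ⟨a, ha, rfl⟩; exact a.2 hv)]
  rw [Set.ncard_union_eq (by rw [Set.disjoint_left]; rintro x ⟨a, ha, rfl⟩ hx; simp at hx)]
  rw [Set.ncard_image_of_injective _ Subtype.val_injective,
    Set.ncard_image_of_injective _ Sum.inl_injective, Set.ncard_singleton, hs4]
  omega

lemma verts_pull_noinr (hr : Sum.inr () ∉ H'.verts) :
    (pull G s H').verts.ncard = H'.verts.ncard := by
  set A : Set {x : V // x ∉ s} := {a | Sum.inl a ∈ H'.verts} with hA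
  have h1 : H'.verts = Sum.inl '' A := by
    ext x
    cases x with
    | inl a => simp [hA]
    | inr u => cases u; simp [hr]
  have h2 : (pull G s H').verts = Subtype.val '' A := by
    ext v
    simp only [pull, Set.mem_setOf_eq]
    constructor
    · intro h
      by_cases hv : v ∈ s
      · rw [toC_mem hv] at h; exact absurd h hr
      · rw [toC_not_mem hv] at h
        exact ⟨⟨v, hv⟩, h, rfl⟩
    · rintro ⟨a, ha, rfl⟩
      rw [toC_not_mem a.2]; exact ha
  rw [h1, h2, Set.ncard_image_of_injective _ Subtype.val_injective,
    Set.ncard_image_of_injective _ Sum.inl_injective]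

lemma edge_pull_inr
    (hone : ∀ x ∉ s, ∀ w ∈ s, ∀ w' ∈ s, G.Adj x w → G.Adj x w' → w = w')
    (hK : ∀ a ∈ s, ∀ b ∈ s, a ≠ b → G.Adj a b) (hs4 : s.ncard = 4)
    (hr : Sum.inr () ∈ H'.verts) :
    (pull G s H').edgeSet.ncard = H'.edgeSet.ncard + 6 := by
  have h1 := Set.ncard_diff_add_ncard_of_subset (Ks_subset_pull hK hr) (Set.toFinite _)
  have h2 : H'.edgeSet.ncard = ((pull G s H').edgeSet \ Ks s).ncard := by
    rw [← image_pull_edges,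
      Set.ncard_image_of_injOn (injOn_map_toC hone (pull G s H').edgeSet_subset)]
  rw [ncard_Ks hs4] at h1
  omega

lemma edge_pull_noinr
    (hone : ∀ x ∉ s, ∀ w ∈ s, ∀ w' ∈ s, G.Adj x w → G.Adj x w' → w = w')
    (hr : Sum.inr () ∉ H'.verts) :
    (pull G s H').edgeSet.ncard = H'.edgeSet.ncard := by
  have hd : (pull G s H').edgeSet \ Ks s = (pull G s H').edgeSet := by
    apply Set.Subset.antisymm Set.diff_subset
    intro e he
    refine ⟨he, fun hk => ?_⟩
    have h0 := pull_inter_Ks (H' := H') hr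
    rw [Set.eq_empty_iff_forall_notMem] at h0
    exact h0 e ⟨he, hk⟩
  rw [← image_pull_edges,
    Set.ncard_image_of_injOn (injOn_map_toC hone (pull G s H').edgeSet_subset), hd]

lemma pull_nonempty (hne : H'.edgeSet.Nonempty) : (pull G s H').edgeSet.Nonempty := by
  rw [← image_pull_edges] at hne
  obtain ⟨e', e, ⟨he, _⟩, _⟩ := hne
  exact ⟨e, he⟩

lemma pull_top : pull G s ⊤ = ⊤ := by
  apply Subgraph.ext
  · ext v; simp [pull]
  · ext u v
    simp only [pull, Subgraph.top_adj]
    constructor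
    · exact fun h => h.1
    · intro h
      refine ⟨h, ?_⟩
      by_cases hu : u ∈ s <;> by_cases hv : v ∈ s
      · exact Or.inl ⟨hu, hv, trivial⟩
      · refine Or.inr ?_
        rw [toC_mem hu, toC_not_mem hv]
        exact (contract_adj_inl_inr.mpr ⟨u, hu, h.symm⟩).symm
      · refine Or.inr ?_
        rw [toC_not_mem hu, toC_mem hv]
        exact contract_adj_inl_inr.mpr ⟨v, hv, h⟩
      · refine Or.inr ?_
        rw [toC_not_mem hu, toC_not_mem hv]
        exact contract_adj_inl_inl.mpr h

end Count


theorem stmt18 {V : Type*} [Finite V] (G : SimpleGraph V)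
    (ℓ : ℕ) (hℓ : ℓ = 1 ∨ ℓ = 2) (hG : Tight ℓ G)
    (s : Set V) (hs4 : s.ncard = 4)
    (hK : ∀ a ∈ s, ∀ b ∈ s, a ≠ b → G.Adj a b)
    (htri : ∀ a b c : V, G.Adj a b → G.Adj b c → G.Adj a c →
      (({a, b, c} : Set V) ∩ s).ncard ≠ 2) :
    (∀ x : V, x ∉ s → ({w ∈ s | G.Adj x w}).ncard ≤ 1) ∧
    Tight ℓ (contractGraph G s) := by
  obtain ⟨hSp, hEq⟩ := hG
  have hone : ∀ x ∉ s, ∀ w ∈ s, ∀ w' ∈ s, G.Adj x w → G.Adj x w' → w = w' := by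
    intro x hx w hw w' hw' haw haw'
    by_contra hne
    apply htri w x w' haw.symm haw' (hK w hw w' hw' hne)
    have hset : ({w, x, w'} : Set V) ∩ s = {w, w'} := by
      ext v
      simp only [Set.mem_inter_iff, Set.mem_insert_iff, Set.mem_singleton_iff]
      constructor
      · rintro ⟨rfl | rfl | rfl, hv⟩
        · exact Or.inl rfl
        · exact absurd hv hx
        · exact Or.inr rfl
      · rintro (rfl | rfl)
        · exact ⟨Or.inl rfl, hw⟩
        · exact ⟨Or.inr (Or.inr rfl), hw'⟩
    rw [hset, Set.ncard_pair hne]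
  refine ⟨?_, ?_, ?_⟩
  · intro x hx
    rw [Set.ncard_le_one (Set.toFinite _)]
    rintro w ⟨hw, haw⟩ w' ⟨hw', haw'⟩
    exact hone x hx w hw w' hw' haw haw'
  · intro H' hne'
    by_cases hr : Sum.inr () ∈ H'.verts
    · have h1 := hSp (pull G s H') (pull_nonempty hne')
      rw [edge_pull_inr hone hK hs4 hr, verts_pull_inr hs4 hr] at h1
      omega
    · have h1 := hSp (pull G s H') (pull_nonempty hne')
      rw [edge_pull_noinr hone hr, verts_pull_noinr hr] at h1
      omega
  · have hE : G.edgeSet.ncard = (contractGraph G s).edgeSet.ncard + 6 := by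
      have h := edge_pull_inr (G := G) (s := s) (H' := ⊤) hone hK hs4 (Set.mem_univ _)
      rw [pull_top] at h
      rw [Subgraph.edgeSet_top, Subgraph.edgeSet_top] at h
      exact h
    have hV : Nat.card V = Nat.card ({x : V // x ∉ s} ⊕ Unit) + 3 := by
      have h1 : s.ncard + (sᶜ).ncard = Nat.card V := Set.ncard_add_ncard_compl s
      have h2 : Nat.card ({x : V // x ∉ s} ⊕ Unit) = (sᶜ).ncard + 1 := by
        have h3 : Nat.card {x : V // x ∉ s} = (sᶜ).ncard := Nat.card_coe_set_eq sᶜ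
        rw [Nat.card_sum, h3]
        simp
      omega
    omega
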